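/- Let $p \equiv 1 \pmod 4$ be prime, $n \geq 3$, $r = \lfloor n/2 \rfloor$, $s = \lfloor (n-1)/2 \rfloor$. Let $\mathcal{O} \subset M_2(\mathbb{Q})$ be the $\mathbb{Z}$-lattice spanned by $\begin{pmatrix}1&0\\0&1\end{pmatrix}, \begin{pmatrix}0&1\\p&0\end{pmatrix}, \begin{pmatrix}p^r&0\\0&0\end{pmatrix}, \begin{pmatrix}0&p^s\\0&0\end{pmatrix}$. Then $\mathcal{O}$ is closed under multiplication, i.e., it is a subring (an order) of $M_2(\mathbb{Q})$, and its index in $M_2(\mathbb{Z})$ as an abelian group is $p^n$. -/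

import Mathlib

open Matrix


private abbrev genSet (p r s : ℕ) : Set (Matrix (Fin 2) (Fin 2) ℚ) :=
  {!![1, 0; 0, 1], !![0, 1; (p : ℚ), 0], !![(p : ℚ) ^ r, 0; 0, 0],
    !![0, (p : ℚ) ^ s; 0, 0]}

private lemma comb_mem (p r s : ℕ) (a b c d : ℤ) :
    a • !![1, 0; 0, 1] + b • !![0, 1; (p : ℚ), 0] + c • !![(p : ℚ) ^ r, 0; 0, 0]
      + d • !![0, (p : ℚ) ^ s; 0, 0] ∈ Submodule.span ℤ (genSet p r s) := by
  refine add_mem (add_mem (add_mem ?_ ?_) ?_) ?_ <;>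
    exact Submodule.smul_mem _ _ (Submodule.subset_span (by simp [genSet]))

private lemma comb_entries (p r s : ℕ) (a b c d : ℤ) :
    a • !![1, 0; 0, 1] + b • !![0, 1; (p : ℚ), 0] + c • !![(p : ℚ) ^ r, 0; 0, 0]
      + d • !![0, (p : ℚ) ^ s; 0, 0]
      = !![(a : ℚ) + c * p ^ r, b + d * p ^ s; b * p, a] := by
  ext i j
  fin_cases i <;> fin_cases j <;>
    simp [Matrix.add_apply, Matrix.smul_apply] <;> ring

private lemma mem_genSpan_iff (p r s : ℕ) (X : Matrix (Fin 2) (Fin 2) ℚ) :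
    X ∈ Submodule.span ℤ (genSet p r s) ↔
      ∃ a b c d : ℤ, X = !![(a : ℚ) + c * p ^ r, b + d * p ^ s; b * p, a] := by
  constructor
  · intro hX
    rw [show (genSet p r s) = insert !![1, 0; 0, 1] (insert !![0, 1; (p:ℚ), 0]
      (insert !![(p:ℚ)^r, 0; 0, 0] {!![0, (p:ℚ)^s; 0, 0]})) from rfl] at hX
    rw [Submodule.mem_span_insert] at hX
    obtain ⟨a, z, hz, rfl⟩ := hX
    rw [Submodule.mem_span_insert] at hz
    obtain ⟨b, z, hz, rfl⟩ := hz
    rw [Submodule.mem_span_insert] at hz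
    obtain ⟨c, z, hz, rfl⟩ := hz
    rw [Submodule.mem_span_singleton] at hz
    obtain ⟨d, rfl⟩ := hz
    exact ⟨a, b, c, d, by rw [← comb_entries]; abel⟩
  · rintro ⟨a, b, c, d, rfl⟩
    rw [← comb_entries]
    exact comb_mem p r s a b c d

private lemma gen_mul_mem (p r s : ℕ) (hsr : s ≤ r) (hrs : r ≤ s + 1)
    {x y : Matrix (Fin 2) (Fin 2) ℚ} (hx : x ∈ genSet p r s) (hy : y ∈ genSet p r s) :
    x * y ∈ Submodule.span ℤ (genSet p r s) := by
  have key : ∀ a b c d : ℤ, ∀ X : Matrix (Fin 2) (Fin 2) ℚ,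
      X = !![(a : ℚ) + c * p ^ r, b + d * p ^ s; b * p, a] →
      X ∈ Submodule.span ℤ (genSet p r s) := by
    intro a b c d X hX
    exact (mem_genSpan_iff p r s X).2 ⟨a, b, c, d, hX⟩
  have hrr : (p : ℚ) ^ (r - s) * p ^ s = p ^ r := by
    rw [← pow_add, Nat.sub_add_cancel hsr]
  have hss : (p : ℚ) ^ (s + 1 - r) * p ^ r = p ^ (s + 1) := by
    rw [← pow_add, Nat.sub_add_cancel hrs]
  have hss' : (p : ℚ) ^ (1 + s - r) * p ^ r = p ^ (s + 1) := by
    rw [show 1 + s - r = s + 1 - r by omega]; exact hss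
  simp only [genSet, Set.mem_insert_iff, Set.mem_singleton_iff] at hx hy
  rcases hx with rfl | rfl | rfl | rfl <;> rcases hy with rfl | rfl | rfl | rfl
  · exact key 1 0 0 0 _ (by rw [Matrix.mul_fin_two]; push_cast; ring_nf)
  · exact key 0 1 0 0 _ (by rw [Matrix.mul_fin_two]; push_cast; ring_nf)
  · exact key 0 0 1 0 _ (by rw [Matrix.mul_fin_two]; push_cast; ring_nf)
  · exact key 0 0 0 1 _ (by rw [Matrix.mul_fin_two]; push_cast; ring_nf)
  · exact key 0 1 0 0 _ (by rw [Matrix.mul_fin_two]; push_cast; ring_nf)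
  · -- J * J = p • I
    exact key (p : ℤ) 0 0 0 _ (by rw [Matrix.mul_fin_two]; push_cast; ring_nf)
  · exact key 0 ((p : ℤ) ^ r) 0 (-(p : ℤ) ^ (r - s)) _ (by rw [Matrix.mul_fin_two]; ext i j; fin_cases i <;> fin_cases j <;> push_cast <;> simp <;> ring_nf <;> ring_nf at hrr hss hss' ⊢ <;> linarith [hrr, hss, hss'])
  · exact key ((p : ℤ) ^ (s + 1)) 0 (-(p : ℤ) ^ (s + 1 - r)) 0 _ (by rw [Matrix.mul_fin_two]; ext i j; fin_cases i <;> fin_cases j <;> push_cast <;> simp <;> ring_nf <;> ring_nf at hrr hss hss' ⊢ <;> linarith [hrr, hss, hss'])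
  · exact key 0 0 1 0 _ (by rw [Matrix.mul_fin_two]; push_cast; ring_nf)
  · exact key 0 0 0 ((p : ℤ) ^ (r - s)) _ (by rw [Matrix.mul_fin_two]; ext i j; fin_cases i <;> fin_cases j <;> push_cast <;> simp <;> ring_nf <;> linarith [hrr, hss, hss'])
  · -- A * A = p^r • A
    refine key 0 0 ((p : ℤ) ^ r) 0 _ ?_
    rw [Matrix.mul_fin_two]; push_cast; ring_nf
  · exact key 0 0 0 ((p : ℤ) ^ r) _ (by rw [Matrix.mul_fin_two]; ext i j; fin_cases i <;> fin_cases j <;> push_cast <;> simp <;> ring_nf <;> ring_nf at hrr hss hss' ⊢ <;> linarith [hrr, hss, hss'])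
  · exact key 0 0 0 1 _ (by rw [Matrix.mul_fin_two]; push_cast; ring_nf)
  · exact key 0 0 ((p : ℤ) ^ (s + 1 - r)) 0 _ (by rw [Matrix.mul_fin_two]; ext i j; fin_cases i <;> fin_cases j <;> push_cast <;> simp <;> ring_nf <;> ring_nf at hrr hss hss' ⊢ <;> linarith [hrr, hss, hss'])
  · -- B * A = 0
    exact key 0 0 0 0 _ (by rw [Matrix.mul_fin_two]; push_cast; ring_nf)
  · -- B * B = 0
    exact key 0 0 0 0 _ (by rw [Matrix.mul_fin_two]; push_cast; ring_nf)

private lemma mul_mem_span (p r s : ℕ) (hsr : s ≤ r) (hrs : r ≤ s + 1) :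
    ∀ x ∈ Submodule.span ℤ (genSet p r s), ∀ y ∈ Submodule.span ℤ (genSet p r s),
      x * y ∈ Submodule.span ℤ (genSet p r s) := by
  intro x hx y hy
  induction hx using Submodule.span_induction with
  | mem g hg =>
    induction hy using Submodule.span_induction with
    | mem h hh => exact gen_mul_mem p r s hsr hrs hg hh
    | zero => simpa using Submodule.zero_mem _
    | add a b _ _ ha hb => rw [mul_add]; exact add_mem ha hb
    | smul t a _ ha => rw [mul_smul_comm]; exact Submodule.smul_mem _ _ ha
  | zero => simpa using Submodule.zero_mem _
  | add a b _ _ ha hb => rw [add_mul]; exact add_mem ha hb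
  | smul t a _ ha => rw [smul_mul_assoc]; exact Submodule.smul_mem _ _ ha

private def Phi : Matrix (Fin 2) (Fin 2) ℤ →+ Matrix (Fin 2) (Fin 2) ℚ :=
  ((Int.castRingHom ℚ).mapMatrix : Matrix (Fin 2) (Fin 2) ℤ →+* Matrix (Fin 2) (Fin 2) ℚ).toAddMonoidHom

private lemma Phi_apply (M : Matrix (Fin 2) (Fin 2) ℤ) (i j : Fin 2) :
    Phi M i j = (M i j : ℚ) := rfl

private def gMap (p r s : ℕ) : Matrix (Fin 2) (Fin 2) ℤ →+ ZMod (p ^ (s + 1)) × ZMod (p ^ r) where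
  toFun M := (((M 1 0 - p * M 0 1 : ℤ) : ZMod (p ^ (s + 1))), ((M 1 1 - M 0 0 : ℤ) : ZMod (p ^ r)))
  map_zero' := by simp
  map_add' M N := by
    simp only [Matrix.add_apply, Prod.mk.injEq, Prod.mk_add_mk]
    constructor <;> push_cast <;> ring

private abbrev Eset : Set (Matrix (Fin 2) (Fin 2) ℚ) :=
  {!![1, 0; 0, 0], !![0, 1; 0, 0], !![0, 0; 1, 0], !![0, 0; 0, 1]}

private lemma mem_Espan_iff (X : Matrix (Fin 2) (Fin 2) ℚ) :
    X ∈ Submodule.span ℤ Eset ↔ ∃ a b c d : ℤ, X = !![(a : ℚ), b; c, d] := by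
  have comb : ∀ a b c d : ℤ,
      a • !![(1:ℚ), 0; 0, 0] + b • !![(0:ℚ), 1; 0, 0] + c • !![(0:ℚ), 0; 1, 0]
        + d • !![(0:ℚ), 0; 0, 1] = !![(a : ℚ), b; c, d] := by
    intro a b c d
    ext i j
    fin_cases i <;> fin_cases j <;> simp
  constructor
  · intro hX
    rw [show Eset = insert !![(1:ℚ), 0; 0, 0] (insert !![(0:ℚ), 1; 0, 0]
      (insert !![(0:ℚ), 0; 1, 0] {!![(0:ℚ), 0; 0, 1]})) from rfl] at hX
    rw [Submodule.mem_span_insert] at hX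
    obtain ⟨a, z, hz, rfl⟩ := hX
    rw [Submodule.mem_span_insert] at hz
    obtain ⟨b, z, hz, rfl⟩ := hz
    rw [Submodule.mem_span_insert] at hz
    obtain ⟨c, z, hz, rfl⟩ := hz
    rw [Submodule.mem_span_singleton] at hz
    obtain ⟨d, rfl⟩ := hz
    exact ⟨a, b, c, d, by rw [← comb a b c d]; abel⟩
  · rintro ⟨a, b, c, d, rfl⟩
    rw [← comb a b c d]
    refine add_mem (add_mem (add_mem ?_ ?_) ?_) ?_ <;>
      exact Submodule.smul_mem _ _ (Submodule.subset_span (by simp [Eset]))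

private lemma map_Phi_top :
    AddSubgroup.map Phi ⊤ = (Submodule.span ℤ Eset).toAddSubgroup := by
  ext x
  simp only [AddSubgroup.mem_map, AddSubgroup.mem_top, true_and, Submodule.mem_toAddSubgroup,
    mem_Espan_iff]
  constructor
  · rintro ⟨M, rfl⟩
    refine ⟨M 0 0, M 0 1, M 1 0, M 1 1, ?_⟩
    ext i j
    fin_cases i <;> fin_cases j <;> simp [Phi_apply]
  · rintro ⟨a, b, c, d, rfl⟩
    refine ⟨!![a, b; c, d], ?_⟩
    ext i j
    fin_cases i <;> fin_cases j <;> simp [Phi_apply]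

private lemma comap_Phi_eq_ker (p r s : ℕ) (hsr : s ≤ r) :
    AddSubgroup.comap Phi (Submodule.span ℤ (genSet p r s)).toAddSubgroup
      = (gMap p r s).ker := by
  ext M
  simp only [AddSubgroup.mem_comap, Submodule.mem_toAddSubgroup, mem_genSpan_iff,
    AddMonoidHom.mem_ker, gMap, AddMonoidHom.coe_mk, ZeroHom.coe_mk, Prod.mk_eq_zero,
    ZMod.intCast_zmod_eq_zero_iff_dvd]
  push_cast
  constructor
  · rintro ⟨a, b, c, d, h⟩
    have e00 : (M 0 0 : ℚ) = a + c * p ^ r := by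
      have := congrFun (congrFun h 0) 0; simpa [Phi_apply] using this
    have e01 : (M 0 1 : ℚ) = b + d * p ^ s := by
      have := congrFun (congrFun h 0) 1; simpa [Phi_apply] using this
    have e10 : (M 1 0 : ℚ) = b * p := by
      have := congrFun (congrFun h 1) 0; simpa [Phi_apply] using this
    have e11 : (M 1 1 : ℚ) = a := by
      have := congrFun (congrFun h 1) 1; simpa [Phi_apply] using this
    have f00 : M 0 0 = a + c * p ^ r := by exact_mod_cast e00
    have f01 : M 0 1 = b + d * p ^ s := by exact_mod_cast e01
    have f10 : M 1 0 = b * p := by exact_mod_cast e10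
    have f11 : M 1 1 = a := by exact_mod_cast e11
    constructor
    · exact ⟨-d, by rw [f10, f01]; ring⟩
    · exact ⟨-c, by rw [f11, f00]; ring⟩
  · rintro ⟨⟨k, hk⟩, ⟨m, hm⟩⟩
    refine ⟨M 1 1, M 0 1 + k * p ^ s, -m, -k, ?_⟩
    have hk' : (M 1 0 : ℚ) - p * M 0 1 = p ^ (s + 1) * k := by exact_mod_cast hk
    have hm' : (M 1 1 : ℚ) - M 0 0 = p ^ r * m := by exact_mod_cast hm
    ext i j
    fin_cases i <;> fin_cases j <;> simp [Phi_apply] <;>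
      first
        | linear_combination (norm := (push_cast; ring1)) (-hm')
        | linear_combination (norm := (push_cast; ring1)) hm'
        | linear_combination (norm := (push_cast; ring1)) hk'
        | linear_combination (norm := (push_cast; ring1)) (-hk')
        | (push_cast; ring1)

private lemma gMap_surjective (p r s : ℕ) : Function.Surjective (gMap p r s) := by
  rintro ⟨u, v⟩
  obtain ⟨x, hx⟩ := ZMod.intCast_surjective u
  obtain ⟨y, hy⟩ := ZMod.intCast_surjective v
  refine ⟨!![0, 0; x, y], ?_⟩
  simp [gMap, hx, hy]

private lemma index_eq (p r s n : ℕ) (hsr : s ≤ r) (hn : s + 1 + r = n) :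
    AddSubgroup.relIndex (Submodule.span ℤ (genSet p r s)).toAddSubgroup
      (Submodule.span ℤ Eset).toAddSubgroup = p ^ n := by
  rw [← map_Phi_top, ← AddSubgroup.relIndex_comap, AddSubgroup.relIndex_top_right,
    comap_Phi_eq_ker p r s hsr, AddSubgroup.index_ker,
    AddMonoidHom.range_eq_top.mpr (gMap_surjective p r s)]
  rw [Nat.card_congr AddSubgroup.topEquiv.toEquiv, Nat.card_prod, Nat.card_zmod, Nat.card_zmod,
    ← pow_add, hn]


/-- Let `p ≡ 1 (mod 4)` be prime, `n ≥ 3`, `r = ⌊n/2⌋`, `s = ⌊(n-1)/2⌋`. The ℤ-lattice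
`𝒪 ⊂ M₂(ℚ)` spanned by `1`, `!![0,1;p,0]`, `!![p^r,0;0,0]`, `!![0,p^s;0,0]` is closed
under multiplication (an order of `M₂(ℚ)`), and its index in `M₂(ℤ)` as an abelian group
is `p^n`. -/
theorem order_in_M2Q_index
    (p n : ℕ) (hp : p.Prime) (hmod : p % 4 = 1) (hn : 3 ≤ n) :
    (∀ x ∈ Submodule.span ℤ
        ({!![1, 0; 0, 1], !![0, 1; (p : ℚ), 0], !![(p : ℚ) ^ (n / 2), 0; 0, 0],
          !![0, (p : ℚ) ^ ((n - 1) / 2); 0, 0]} : Set (Matrix (Fin 2) (Fin 2) ℚ)),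
      ∀ y ∈ Submodule.span ℤ
        ({!![1, 0; 0, 1], !![0, 1; (p : ℚ), 0], !![(p : ℚ) ^ (n / 2), 0; 0, 0],
          !![0, (p : ℚ) ^ ((n - 1) / 2); 0, 0]} : Set (Matrix (Fin 2) (Fin 2) ℚ)),
        x * y ∈ Submodule.span ℤ
        ({!![1, 0; 0, 1], !![0, 1; (p : ℚ), 0], !![(p : ℚ) ^ (n / 2), 0; 0, 0],
          !![0, (p : ℚ) ^ ((n - 1) / 2); 0, 0]} : Set (Matrix (Fin 2) (Fin 2) ℚ))) ∧
    AddSubgroup.relIndex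
      (Submodule.span ℤ
        ({!![1, 0; 0, 1], !![0, 1; (p : ℚ), 0], !![(p : ℚ) ^ (n / 2), 0; 0, 0],
          !![0, (p : ℚ) ^ ((n - 1) / 2); 0, 0]} : Set (Matrix (Fin 2) (Fin 2) ℚ))).toAddSubgroup
      (Submodule.span ℤ
        ({!![1, 0; 0, 0], !![0, 1; 0, 0], !![0, 0; 1, 0],
          !![0, 0; 0, 1]} : Set (Matrix (Fin 2) (Fin 2) ℚ))).toAddSubgroup = p ^ n := by
  constructor
  · exact mul_mem_span p (n / 2) ((n - 1) / 2) (by omega) (by omega)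
  · exact index_eq p (n / 2) ((n - 1) / 2) n (by omega) (by omega)
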